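/- Let μ, ν ∈ ℝ with μ + ν > −1 and μ − ν a nonnegative integer. If μ − ν is even, then ∫₀^∞ w_{μ,ν}(x) ( x − ((μ+1)² − ν²) ) dx = 0; if μ − ν is odd, then ∫₀^∞ w_{μ,ν}(x) ( x − ((μ+2)² − ν²) ) dx = 0. Equivalently, the monic degree-one orthogonal polynomial for w_{μ,ν} is φ₁(x) = x − (μ+1)² + ν² when μ − ν is even and φ₁(x) = x − (μ+2)² + ν² when μ − ν is odd. -/

import Mathlib

open MeasureTheory Filter Set Polynomial
open scoped Classical

noncomputable section

/-- The Abel limit of `∫₀^∞ g(x) dx` is `L`: for every `s > 0` the integral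
`∫₀^∞ e^{-s x} g(x) dx` converges and these integrals tend to `L` as `s → 0⁺`. -/
def HasAbelLimit (g : ℝ → ℂ) (L : ℂ) : Prop :=
  (∀ s : ℝ, 0 < s →
    IntegrableOn (fun x : ℝ => Complex.exp (-(s : ℂ) * (x : ℂ)) * g x) (Set.Ioi 0)) ∧
  Tendsto (fun s : ℝ => ∫ x in Set.Ioi (0:ℝ), Complex.exp (-(s : ℂ) * (x : ℂ)) * g x)
    (nhdsWithin 0 (Set.Ioi 0)) (nhds L)

/-- Bessel function of the first kind of order `ν`, for `x > 0`, with the convention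
`1/Γ(z) = 0` at nonpositive integers `z` (automatic since `Real.Gamma` vanishes there). -/
def besselJ (ν x : ℝ) : ℝ :=
  ∑' k : ℕ, ((-1 : ℝ) ^ k / ((k.factorial : ℝ) * Real.Gamma (ν + k + 1))) *
    (x / 2) ^ (ν + 2 * (k : ℝ))

/-- Modified Bessel function of the second kind of order `ν`, for `x > 0`. -/
def besselK (ν x : ℝ) : ℝ :=
  ∫ t in Set.Ioi (0:ℝ), Real.exp (-x * Real.cosh t) * Real.cosh (ν * t)

/-- The weight function `w_{μ,ν}` on `(0,∞)`. -/
def weightW (μ ν : ℝ) (x : ℝ) : ℝ :=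
  if ∃ m : ℤ, μ - ν = 2 * m then (1/2) * x ^ ((μ - 1)/2) * besselK ν (Real.sqrt x)
  else (1/2) * x ^ (μ/2) * besselK ν (Real.sqrt x)

/-- `0 < x_1 < ⋯ < x_n` together with positive weights `w_1, …, w_n` form an `n`-point
Gaussian quadrature rule for `w_{μ,ν}`. -/
def IsGaussRule (μ ν : ℝ) (n : ℕ) (xs ws : Fin n → ℝ) : Prop :=
  StrictMono xs ∧ (∀ j, 0 < xs j) ∧ (∀ j, 0 < ws j) ∧
  ∀ p : Polynomial ℝ, p.natDegree ≤ 2 * n - 1 →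
    ∑ j, ws j * p.eval (xs j) = ∫ x in Set.Ioi (0:ℝ), weightW μ ν x * p.eval x

/-- `κ = μ` if `μ - ν` is even and `κ = μ + 1` if `μ - ν` is odd. -/
def kappaQ (μ ν : ℕ) : ℝ := if Even (μ - ν) then (μ : ℝ) else (μ : ℝ) + 1

/-- The boundary weights `ŵ_k⁰` of the generalized Gauss–Radau rule. -/
def wHat0 (μ ν : ℕ) {n : ℕ} (xs ws : Fin n → ℝ) (k : ℕ) : ℝ :=
  (1 / (k.factorial : ℝ)) *
    (2 ^ k * Real.Gamma (((ν : ℝ) + k + 1)/2) / Real.Gamma (((ν : ℝ) - k + 1)/2)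
      - (2 / Real.pi) * Real.cos (((k : ℝ) - ν) * Real.pi / 2) *
          ∑ j, ws j * (xs j) ^ (((k : ℝ) - kappaQ μ ν)/2))

/-- The generalized Gauss–Radau rule `(Q_{2n,μ} f)(ω)`. -/
def QRule (μ ν : ℕ) {n : ℕ} (xs ws : Fin n → ℝ) (f : ℂ → ℂ) (ω : ℝ) : ℂ :=
  (1 / (ω : ℂ)) *
    ((∑ k ∈ Finset.range μ, (wHat0 μ ν xs ws k : ℂ) / (ω : ℂ) ^ k * iteratedDeriv k f 0)
      + ∑ j, ((ws j * (xs j) ^ (-(kappaQ μ ν)/2) / Real.pi : ℝ) : ℂ) *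
          (Complex.exp (-(ν : ℂ) * (Real.pi : ℂ) * Complex.I / 2) *
              f (Complex.I * (Real.sqrt (xs j) : ℂ) / (ω : ℂ))
            + Complex.exp ((ν : ℂ) * (Real.pi : ℂ) * Complex.I / 2) *
              f (-Complex.I * (Real.sqrt (xs j) : ℂ) / (ω : ℂ))))

/-- `P` is a monic polynomial of degree `m` orthogonal with respect to `x^μ J_ν(x)`
on `(0,∞)`, all integrals taken in the Abel-limit sense. -/
def MonicOrthoBessel (μ ν : ℝ) (m : ℕ) (P : Polynomial ℂ) : Prop :=
  P.Monic ∧ P.natDegree = m ∧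
  ∀ k < m, HasAbelLimit
    (fun x : ℝ => P.eval (x : ℂ) * ((x ^ ((k : ℝ) + μ) : ℝ) : ℂ) * (besselJ ν x : ℂ)) 0

/-- `φ` is the monic real polynomial of degree `m` orthogonal to all lower powers
with respect to the weight `w_{μ,ν}` on `(0,∞)`. -/
def IsMonicOrthoW (μ ν : ℝ) (m : ℕ) (φ : Polynomial ℝ) : Prop :=
  φ.Monic ∧ φ.natDegree = m ∧
  ∀ k < m, ∫ x in Set.Ioi (0:ℝ), weightW μ ν x * φ.eval x * x ^ k = 0



lemma cosh_le_exp_abs (x : ℝ) : Real.cosh x ≤ Real.exp |x| := by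
  rw [Real.cosh_eq]
  have h1 : Real.exp x ≤ Real.exp |x| := Real.exp_le_exp.2 (le_abs_self x)
  have h2 : Real.exp (-x) ≤ Real.exp |x| := Real.exp_le_exp.2 (neg_le_abs x)
  linarith

lemma exp_le_two_cosh (x : ℝ) : Real.exp x ≤ 2 * Real.cosh x := by
  rw [Real.cosh_eq]; nlinarith [Real.exp_pos (-x)]

lemma key_bound {ν s : ℝ} (hs : 0 ≤ s) {u : ℝ} (hu : 0 ≤ u) :
    Real.cosh (ν * u) * Real.cosh u ^ (-s) ≤ (2:ℝ) ^ s * Real.exp ((|ν| - s) * u) := by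
  have hcu : (0:ℝ) < Real.cosh u := Real.cosh_pos u
  have h1 : Real.cosh (ν * u) ≤ Real.exp (|ν| * u) := by
    have := cosh_le_exp_abs (ν * u)
    rwa [abs_mul, abs_of_nonneg hu] at this
  have h2 : Real.cosh u ^ (-s) ≤ (Real.exp u / 2) ^ (-s) := by
    apply Real.rpow_le_rpow_of_nonpos (by positivity) _ (by linarith)
    have := exp_le_two_cosh u; linarith
  have h3 : (Real.exp u / 2) ^ (-s) = (2:ℝ) ^ s * Real.exp (-s * u) := by
    rw [Real.div_rpow (Real.exp_pos u).le (by norm_num), ← Real.exp_mul,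
      Real.rpow_neg (by norm_num : (0:ℝ) ≤ 2)]
    rw [mul_comm u (-s)]
    field_simp
  calc Real.cosh (ν * u) * Real.cosh u ^ (-s)
      ≤ Real.exp (|ν| * u) * ((Real.exp u / 2) ^ (-s)) := by
        apply mul_le_mul h1 h2 (by positivity) (by positivity)
    _ = (2:ℝ) ^ s * Real.exp ((|ν| - s) * u) := by
        rw [h3, mul_left_comm, ← Real.exp_add]; ring_nf

lemma integrable_coshdiv {ν s : ℝ} (h : |ν| < s) :
    IntegrableOn (fun u => Real.cosh (ν * u) * Real.cosh u ^ (-s)) (Ioi (0:ℝ)) := by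
  have hs : 0 ≤ s := (abs_nonneg ν).trans h.le
  have hg : IntegrableOn (fun u => (2:ℝ) ^ s * Real.exp (-(s - |ν|) * u)) (Ioi (0:ℝ)) :=
    (exp_neg_integrableOn_Ioi 0 (by linarith)).const_mul _
  apply hg.mono' ?_ ?_
  · apply Continuous.aestronglyMeasurable
    apply (Real.continuous_cosh.comp (continuous_const.mul continuous_id)).mul
    apply Real.continuous_cosh.rpow_const
    intro x; exact Or.inl (Real.cosh_pos x).ne'
  · filter_upwards [ae_restrict_mem measurableSet_Ioi] with u hu
    rw [Real.norm_eq_abs, abs_of_nonneg (by positivity)]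
    have := key_bound (ν := ν) hs (le_of_lt hu)
    rwa [show -(s - |ν|) = |ν| - s by ring]

lemma abs_sinh_le_cosh (x : ℝ) : |Real.sinh x| ≤ Real.cosh x := by
  rw [abs_le]
  constructor
  · have := Real.exp_pos x
    rw [Real.sinh_eq, Real.cosh_eq]; nlinarith
  · have := Real.exp_pos (-x)
    rw [Real.sinh_eq, Real.cosh_eq]; nlinarith

lemma C_step {ν s : ℝ} (h : |ν| < s) :
    s * (s + 1) * (∫ u in Ioi (0:ℝ), Real.cosh (ν * u) * Real.cosh u ^ (-(s+2)))
      = (s^2 - ν^2) * ∫ u in Ioi (0:ℝ), Real.cosh (ν * u) * Real.cosh u ^ (-s) := by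
  have hs : 0 ≤ s := (abs_nonneg ν).trans h.le
  set F : ℝ → ℝ := fun u => s * ((Real.cosh (ν*u) * Real.sinh u) * Real.cosh u ^ (-(s+1)))
      + ν * (Real.sinh (ν*u) * Real.cosh u ^ (-s)) with hF_def
  set f' : ℝ → ℝ := fun u => (ν^2 - s^2) * (Real.cosh (ν*u) * Real.cosh u ^ (-s))
      + s*(s+1) * (Real.cosh (ν*u) * Real.cosh u ^ (-(s+2))) with hf'_def
  have hc : ∀ u : ℝ, (0:ℝ) < Real.cosh u := Real.cosh_pos
  have hF : ∀ u : ℝ, HasDerivAt F (f' u) u := by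
    intro u
    have d1 : HasDerivAt (fun u : ℝ => ν * u) ν u := by
      simpa using (hasDerivAt_id u).const_mul ν
    have dA : HasDerivAt (fun u : ℝ => Real.cosh (ν*u)) (Real.sinh (ν*u) * ν) u := d1.cosh
    have dB : HasDerivAt (fun u : ℝ => Real.sinh (ν*u)) (Real.cosh (ν*u) * ν) u := d1.sinh
    have dsh : HasDerivAt (fun u : ℝ => Real.sinh u) (Real.cosh u * 1) u := (hasDerivAt_id u).sinh
    have dch : HasDerivAt (fun u : ℝ => Real.cosh u) (Real.sinh u * 1) u := (hasDerivAt_id u).cosh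
    have dp1 : HasDerivAt (fun u : ℝ => Real.cosh u ^ (-(s+1)))
        ((Real.sinh u * 1) * (-(s+1)) * Real.cosh u ^ (-(s+1)-1)) u :=
      dch.rpow_const (Or.inl (hc u).ne')
    have dp0 : HasDerivAt (fun u : ℝ => Real.cosh u ^ (-s))
        ((Real.sinh u * 1) * (-s) * Real.cosh u ^ (-s-1)) u :=
      dch.rpow_const (Or.inl (hc u).ne')
    have hD := (((dA.mul dsh).mul dp1).const_mul s).add ((dB.mul dp0).const_mul ν)
    convert hD using 1
    · rfl
    · rfl
    · rfl
    have e1 : Real.cosh u ^ (-(s+1)) = Real.cosh u ^ (-(s+2)) * Real.cosh u := by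
      rw [← Real.rpow_add_one (hc u).ne']; ring_nf
    have e2 : Real.cosh u ^ (-(s+1)-1) = Real.cosh u ^ (-(s+2)) := by
      congr 1; ring
    have e3 : Real.cosh u ^ (-s) = Real.cosh u ^ (-(s+2)) * Real.cosh u * Real.cosh u := by
      rw [← Real.rpow_add_one (hc u).ne', ← Real.rpow_add_one (hc u).ne']; ring_nf
    have e4 : Real.cosh u ^ (-s-1) = Real.cosh u ^ (-(s+2)) * Real.cosh u := by
      rw [← Real.rpow_add_one (hc u).ne']; ring_nf
    simp only [hf'_def, e1, e2, e3, e4, Pi.mul_apply]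
    linear_combination (s*(s+1) * Real.cosh (ν*u) * Real.cosh u ^ (-(s+2))) * (Real.sinh_sq u)
  have hbound : ∀ u : ℝ, 0 ≤ u → ‖F u‖ ≤ (s + |ν|) * ((2:ℝ)^s * Real.exp ((|ν| - s) * u)) := by
    intro u hu
    have hA : 0 < Real.cosh (ν*u) := hc _
    have e1 : Real.cosh u ^ (-(s+1)) * Real.cosh u = Real.cosh u ^ (-s) := by
      rw [← Real.rpow_add_one (hc u).ne']; ring_nf
    have h1 : |Real.cosh (ν*u) * Real.sinh u * Real.cosh u ^ (-(s+1))|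
        ≤ Real.cosh (ν*u) * Real.cosh u ^ (-s) := by
      have hp : (0:ℝ) < Real.cosh u ^ (-(s+1)) := Real.rpow_pos_of_pos (hc u) _
      rw [abs_mul, abs_mul, abs_of_pos hA, abs_of_pos hp, ← e1]
      have h' : |Real.sinh u| * Real.cosh u ^ (-(s+1))
          ≤ Real.cosh u * Real.cosh u ^ (-(s+1)) :=
        mul_le_mul_of_nonneg_right (abs_sinh_le_cosh u) hp.le
      calc Real.cosh (ν*u) * |Real.sinh u| * Real.cosh u ^ (-(s+1))
          = Real.cosh (ν*u) * (|Real.sinh u| * Real.cosh u ^ (-(s+1))) := by ring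
        _ ≤ Real.cosh (ν*u) * (Real.cosh u * Real.cosh u ^ (-(s+1))) :=
            mul_le_mul_of_nonneg_left h' hA.le
        _ = Real.cosh (ν*u) * (Real.cosh u ^ (-(s+1)) * Real.cosh u) := by ring
    have h2 : |Real.sinh (ν*u) * Real.cosh u ^ (-s)| ≤ Real.cosh (ν*u) * Real.cosh u ^ (-s) := by
      rw [abs_mul, abs_of_pos (Real.rpow_pos_of_pos (hc u) _)]
      exact mul_le_mul_of_nonneg_right (abs_sinh_le_cosh _) (Real.rpow_pos_of_pos (hc u) _).le
    have hkey := key_bound (ν := ν) hs hu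
    calc ‖F u‖ ≤ s * |Real.cosh (ν*u) * Real.sinh u * Real.cosh u ^ (-(s+1))|
          + |ν| * |Real.sinh (ν*u) * Real.cosh u ^ (-s)| := by
          rw [hF_def]; simp only [Real.norm_eq_abs]
          calc |s * (Real.cosh (ν*u) * Real.sinh u * Real.cosh u ^ (-(s+1)))
              + ν * (Real.sinh (ν*u) * Real.cosh u ^ (-s))|
              ≤ |s * (Real.cosh (ν*u) * Real.sinh u * Real.cosh u ^ (-(s+1)))|
                + |ν * (Real.sinh (ν*u) * Real.cosh u ^ (-s))| := abs_add_le _ _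
            _ = s * |Real.cosh (ν*u) * Real.sinh u * Real.cosh u ^ (-(s+1))|
                + |ν| * |Real.sinh (ν*u) * Real.cosh u ^ (-s)| := by
                rw [abs_mul s, abs_mul ν, abs_of_nonneg hs]
      _ ≤ s * (Real.cosh (ν*u) * Real.cosh u ^ (-s)) + |ν| * (Real.cosh (ν*u) * Real.cosh u ^ (-s)) := by
          have := mul_le_mul_of_nonneg_left h1 hs
          have := mul_le_mul_of_nonneg_left h2 (abs_nonneg ν)
          linarith
      _ = (s + |ν|) * (Real.cosh (ν*u) * Real.cosh u ^ (-s)) := by ring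
      _ ≤ (s + |ν|) * ((2:ℝ)^s * Real.exp ((|ν| - s) * u)) := by
          apply mul_le_mul_of_nonneg_left hkey (by positivity)
  have htend : Tendsto F atTop (nhds 0) := by
    have h1 : Tendsto (fun u : ℝ => (s - |ν|) * u) atTop atTop :=
      Tendsto.const_mul_atTop (by linarith) tendsto_id
    have h2 : Tendsto (fun u : ℝ => Real.exp ((|ν| - s) * u)) atTop (nhds 0) := by
      have h3 := Real.tendsto_exp_neg_atTop_nhds_zero.comp h1
      have h4 : (fun u : ℝ => Real.exp ((|ν| - s) * u))
          = ((fun x => Real.exp (-x)) ∘ fun u : ℝ => (s - |ν|) * u) := by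
        funext u; simp only [Function.comp]; congr 1; ring
      rw [h4]; exact h3
    have h5 := h2.const_mul ((s + |ν|) * (2:ℝ)^s)
    rw [mul_zero] at h5
    apply squeeze_zero_norm' ((eventually_ge_atTop (0:ℝ)).mono (fun u hu => hbound u hu))
    simpa [mul_assoc] using h5
  have hint1 : IntegrableOn (fun u => Real.cosh (ν*u) * Real.cosh u ^ (-s)) (Ioi (0:ℝ)) :=
    integrable_coshdiv h
  have hint2 : IntegrableOn (fun u => Real.cosh (ν*u) * Real.cosh u ^ (-(s+2))) (Ioi (0:ℝ)) :=
    integrable_coshdiv (by linarith)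
  have hint : IntegrableOn f' (Ioi (0:ℝ)) := (hint1.const_mul _).add (hint2.const_mul _)
  have hcont : ContinuousWithinAt F (Ici (0:ℝ)) 0 := (hF 0).continuousAt.continuousWithinAt
  have key := integral_Ioi_of_hasDerivAt_of_tendsto hcont (fun x _ => hF x) hint htend
  have hF0 : F 0 = 0 := by simp [hF_def]
  rw [hF0, sub_zero] at key
  have := MeasureTheory.integral_add (hint1.const_mul (ν^2 - s^2)) (hint2.const_mul (s*(s+1)))
  simp only [hf'_def] at key
  rw [this] at key
  rw [integral_const_mul, integral_const_mul] at key
  linear_combination key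

lemma besselK_moment {ν a : ℝ} (h : |ν| < a + 1) :
    IntegrableOn (fun t => t ^ a * besselK ν t) (Ioi (0:ℝ))
    ∧ ∫ t in Ioi (0:ℝ), t ^ a * besselK ν t
      = Real.Gamma (a+1) * ∫ u in Ioi (0:ℝ), Real.cosh (ν*u) * Real.cosh u ^ (-(a+1)) := by
  have ha1 : (0:ℝ) < a + 1 := lt_of_le_of_lt (abs_nonneg ν) h
  have ha : (-1:ℝ) < a := by linarith
  set f : ℝ → ℝ → ℝ :=
    fun t u => t ^ a * (Real.exp (-t * Real.cosh u) * Real.cosh (ν * u)) with hf_def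
  have hmeas : Measurable (Function.uncurry f) := by
    have : Function.uncurry f = fun p : ℝ × ℝ =>
        p.1 ^ a * (Real.exp (-p.1 * Real.cosh p.2) * Real.cosh (ν * p.2)) := rfl
    rw [this]; fun_prop
  -- inner integrability in t for each u > 0
  have hinner : ∀ u : ℝ, 0 < u → IntegrableOn (fun t => f t u) (Ioi (0:ℝ)) := by
    intro u _
    have hcu : (0:ℝ) < Real.cosh u := Real.cosh_pos u
    have base : IntegrableOn (fun t : ℝ => t ^ a * Real.exp (-Real.cosh u * t ^ (1:ℝ)))
        (Ioi (0:ℝ)) := integrableOn_rpow_mul_exp_neg_mul_rpow ha zero_lt_one hcu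
    have : IntegrableOn (fun t : ℝ => (t ^ a * Real.exp (-Real.cosh u * t)) * Real.cosh (ν * u))
        (Ioi (0:ℝ)) := by
      apply Integrable.mul_const
      apply base.congr_fun ?_ measurableSet_Ioi
      intro t ht; simp only [Real.rpow_one]
    apply this.congr_fun ?_ measurableSet_Ioi
    intro t ht; simp only [hf_def]; ring_nf
  -- value of the inner t-integral for u > 0
  have hval : ∀ u : ℝ, 0 < u → (∫ t in Ioi (0:ℝ), f t u)
      = Real.Gamma (a+1) * (Real.cosh (ν*u) * Real.cosh u ^ (-(a+1))) := by
    intro u _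
    have hcu : (0:ℝ) < Real.cosh u := Real.cosh_pos u
    have e1 : ∀ t : ℝ, f t u = (t ^ ((a+1)-1) * Real.exp (-(Real.cosh u * t))) * Real.cosh (ν*u) := by
      intro t; simp only [hf_def, add_sub_cancel_right]; ring_nf
    calc (∫ t in Ioi (0:ℝ), f t u)
        = ∫ t in Ioi (0:ℝ), (t ^ ((a+1)-1) * Real.exp (-(Real.cosh u * t))) * Real.cosh (ν*u) := by
          exact integral_congr_ae (Eventually.of_forall (fun t => e1 t))
      _ = (∫ t in Ioi (0:ℝ), t ^ ((a+1)-1) * Real.exp (-(Real.cosh u * t))) * Real.cosh (ν*u) := by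
          rw [integral_mul_const]
      _ = ((1 / Real.cosh u) ^ (a+1) * Real.Gamma (a+1)) * Real.cosh (ν*u) := by
          rw [Real.integral_rpow_mul_exp_neg_mul_Ioi ha1 hcu]
      _ = Real.Gamma (a+1) * (Real.cosh (ν*u) * Real.cosh u ^ (-(a+1))) := by
          rw [one_div, ← Real.rpow_neg_one (Real.cosh u), ← Real.rpow_mul hcu.le,
            show (-1:ℝ)*(a+1) = -(a+1) by ring]
          ring
  -- nonnegativity on the relevant region
  have hnn : ∀ t ∈ Ioi (0:ℝ), ∀ u : ℝ, 0 ≤ f t u := by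
    intro t ht u
    have : (0:ℝ) < t := ht
    have h1 : (0:ℝ) < t ^ a := Real.rpow_pos_of_pos this a
    positivity
  -- norm integral equals the value
  have hnormval : ∀ u : ℝ, 0 < u → (∫ t in Ioi (0:ℝ), ‖f t u‖)
      = Real.Gamma (a+1) * (Real.cosh (ν*u) * Real.cosh u ^ (-(a+1))) := by
    intro u hu
    rw [← hval u hu]
    apply setIntegral_congr_fun measurableSet_Ioi
    intro t ht
    exact Real.norm_of_nonneg (hnn t ht u)
  -- the product integrability
  have hprod : Integrable (Function.uncurry f)
      ((volume.restrict (Ioi (0:ℝ))).prod (volume.restrict (Ioi (0:ℝ)))) := by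
    rw [integrable_prod_iff' hmeas.aestronglyMeasurable]
    constructor
    · filter_upwards [ae_restrict_mem measurableSet_Ioi] with u hu
      exact hinner u hu
    · apply Integrable.congr (((integrable_coshdiv h).const_mul (Real.Gamma (a+1))))
      filter_upwards [ae_restrict_mem measurableSet_Ioi] with u hu
      exact (hnormval u hu).symm
  -- identify the marginal with t ^ a * besselK
  have hmarg : ∀ t : ℝ, (∫ u in Ioi (0:ℝ), f t u) = t ^ a * besselK ν t := by
    intro t
    simp only [hf_def, besselK]
    rw [integral_const_mul]
  constructor
  · have := hprod.integral_prod_left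
    apply this.congr
    filter_upwards with t using hmarg t
  · have swap := integral_integral_swap hprod
    calc (∫ t in Ioi (0:ℝ), t ^ a * besselK ν t)
        = ∫ t in Ioi (0:ℝ), ∫ u in Ioi (0:ℝ), f t u := by
          apply integral_congr_ae
          filter_upwards with t using (hmarg t).symm
      _ = ∫ u in Ioi (0:ℝ), ∫ t in Ioi (0:ℝ), f t u := swap
      _ = ∫ u in Ioi (0:ℝ), Real.Gamma (a+1) * (Real.cosh (ν*u) * Real.cosh u ^ (-(a+1))) := by
          apply integral_congr_ae
          filter_upwards [ae_restrict_mem measurableSet_Ioi] with u hu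
          exact hval u hu
      _ = Real.Gamma (a+1) * ∫ u in Ioi (0:ℝ), Real.cosh (ν*u) * Real.cosh u ^ (-(a+1)) := by
          rw [integral_const_mul]


lemma besselK_moment_step {ν a : ℝ} (h : |ν| < a + 1) :
    ∫ t in Ioi (0:ℝ), t ^ (a+2) * besselK ν t
      = ((a+1)^2 - ν^2) * ∫ t in Ioi (0:ℝ), t ^ a * besselK ν t := by
  have ha1 : (0:ℝ) < a + 1 := lt_of_le_of_lt (abs_nonneg ν) h
  have val1 := (besselK_moment h).2
  have val2 := (besselK_moment (ν := ν) (a := a + 2) (by linarith)).2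
  have hstep := C_step (ν := ν) (s := a+1) h
  have hg : Real.Gamma (a+2+1) = (a+2) * ((a+1) * Real.Gamma (a+1)) := by
    rw [Real.Gamma_add_one (by linarith : (a:ℝ)+2 ≠ 0),
      show (a:ℝ)+2 = (a+1)+1 by ring, Real.Gamma_add_one (by linarith : (a:ℝ)+1 ≠ 0)]
  have he : (fun u : ℝ => Real.cosh (ν*u) * Real.cosh u ^ (-(a+1+2)))
      = (fun u : ℝ => Real.cosh (ν*u) * Real.cosh u ^ (-(a+2+1))) := by
    funext u; norm_num; left; congr 1; ring
  rw [he] at hstep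
  rw [val2, val1, hg]
  linear_combination Real.Gamma (a+1) * hstep

/-- the monic degree-one orthogonal polynomial for `w_{μ,ν}`. -/
theorem phi_one_weightW (μ ν : ℝ) (h1 : -1 < μ + ν) (hint : ∃ m : ℕ, μ - ν = m) :
    ((∃ m : ℕ, μ - ν = 2 * m) →
      ∫ x in Set.Ioi (0:ℝ), weightW μ ν x * (x - ((μ + 1)^2 - ν^2)) = 0) ∧
    ((∃ m : ℕ, μ - ν = 2 * m + 1) →
      ∫ x in Set.Ioi (0:ℝ), weightW μ ν x * (x - ((μ + 2)^2 - ν^2)) = 0) := by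
  obtain ⟨m0, hm0⟩ := hint
  have hd : (0:ℝ) ≤ μ - ν := by rw [hm0]; positivity
  have habs : |ν| < μ + 1 := abs_lt.2 ⟨by linarith, by linarith⟩
  constructor
  · rintro ⟨m, hm⟩
    set c : ℝ := (μ + 1)^2 - ν^2 with hc_def
    have hif : ∃ k : ℤ, μ - ν = 2 * k := ⟨m, by exact_mod_cast hm⟩
    have hw : ∀ x : ℝ, weightW μ ν x = (1/2) * x ^ ((μ - 1)/2) * besselK ν (Real.sqrt x) := by
      intro x; rw [weightW, if_pos hif]
    have hI0 := besselK_moment (ν := ν) (a := μ) habs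
    have hI2 := besselK_moment (ν := ν) (a := μ + 2) (by
      rcases abs_lt.1 habs with ⟨hl, hr⟩
      exact abs_lt.2 ⟨by linarith, by linarith⟩)
    have hstep := besselK_moment_step (ν := ν) (a := μ) habs
    have cov := MeasureTheory.integral_comp_rpow_Ioi_of_pos
      (g := fun x => weightW μ ν x * (x - c)) (p := 2) two_pos
    rw [← cov]
    have hpt : ∀ t ∈ Ioi (0:ℝ),
        (2 * t ^ ((2:ℝ) - 1)) • (weightW μ ν (t ^ (2:ℝ)) * (t ^ (2:ℝ) - c))
          = t ^ (μ + 2) * besselK ν t - c * (t ^ μ * besselK ν t) := by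
      intro t ht
      have ht' : (0:ℝ) < t := ht
      have hsq : Real.sqrt (t ^ (2:ℝ)) = t := by
        rw [show (2:ℝ) = ((2:ℕ):ℝ) by norm_num, Real.rpow_natCast, Real.sqrt_sq ht'.le]
      have hp3 : (t ^ (2:ℝ)) ^ ((μ - 1)/2) = t ^ (μ - 1) := by
        rw [← Real.rpow_mul ht'.le, show (2:ℝ) * ((μ - 1)/2) = μ - 1 by ring]
      have e1 : t ^ (μ + 2) = t ^ (μ - 1) * t ^ (1:ℝ) * t ^ (2:ℝ) := by
        rw [← Real.rpow_add ht', ← Real.rpow_add ht']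
        congr 1; ring
      have e2 : t ^ μ = t ^ (μ - 1) * t ^ (1:ℝ) := by
        rw [← Real.rpow_add ht']; congr 1; ring
      rw [smul_eq_mul, hw, hsq, hp3, show (2:ℝ) - 1 = 1 by norm_num, e1, e2]
      simp only [Real.rpow_one]
      ring
    rw [setIntegral_congr_fun measurableSet_Ioi hpt]
    rw [MeasureTheory.integral_sub (hI2.1) ((hI0.1).const_mul c)]
    rw [MeasureTheory.integral_const_mul, hstep]
    ring
  · rintro ⟨m, hm⟩
    set c : ℝ := (μ + 2)^2 - ν^2 with hc_def
    have hif : ¬ ∃ k : ℤ, μ - ν = 2 * k := by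
      rintro ⟨k, hk⟩
      have hcast : ((2 * k : ℤ) : ℝ) = ((2 * (m : ℤ) + 1 : ℤ) : ℝ) := by
        push_cast; linarith
      have h2 : (2 * k : ℤ) = 2 * (m : ℤ) + 1 := Int.cast_injective hcast
      omega
    have hw : ∀ x : ℝ, weightW μ ν x = (1/2) * x ^ (μ/2) * besselK ν (Real.sqrt x) := by
      intro x; rw [weightW, if_neg hif]
    have habs2 : |ν| < μ + 1 + 1 := by
      rcases abs_lt.1 habs with ⟨hl, hr⟩
      exact abs_lt.2 ⟨by linarith, by linarith⟩
    have hI0 := besselK_moment (ν := ν) (a := μ + 1) habs2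
    have hI2 := besselK_moment (ν := ν) (a := μ + 1 + 2) (by
      rcases abs_lt.1 habs with ⟨hl, hr⟩
      exact abs_lt.2 ⟨by linarith, by linarith⟩)
    have hstep := besselK_moment_step (ν := ν) (a := μ + 1) habs2
    have cov := MeasureTheory.integral_comp_rpow_Ioi_of_pos
      (g := fun x => weightW μ ν x * (x - c)) (p := 2) two_pos
    rw [← cov]
    have hpt : ∀ t ∈ Ioi (0:ℝ),
        (2 * t ^ ((2:ℝ) - 1)) • (weightW μ ν (t ^ (2:ℝ)) * (t ^ (2:ℝ) - c))
          = t ^ (μ + 1 + 2) * besselK ν t - c * (t ^ (μ + 1) * besselK ν t) := by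
      intro t ht
      have ht' : (0:ℝ) < t := ht
      have hsq : Real.sqrt (t ^ (2:ℝ)) = t := by
        rw [show (2:ℝ) = ((2:ℕ):ℝ) by norm_num, Real.rpow_natCast, Real.sqrt_sq ht'.le]
      have hp3 : (t ^ (2:ℝ)) ^ (μ/2) = t ^ μ := by
        rw [← Real.rpow_mul ht'.le, show (2:ℝ) * (μ/2) = μ by ring]
      have e1 : t ^ (μ + 1 + 2) = t ^ μ * t ^ (1:ℝ) * t ^ (2:ℝ) := by
        rw [← Real.rpow_add ht', ← Real.rpow_add ht']
      have e2 : t ^ (μ + 1) = t ^ μ * t ^ (1:ℝ) := by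
        rw [← Real.rpow_add ht']
      rw [smul_eq_mul, hw, hsq, hp3, show (2:ℝ) - 1 = 1 by norm_num, e1, e2]
      simp only [Real.rpow_one]
      ring
    rw [setIntegral_congr_fun measurableSet_Ioi hpt]
    rw [MeasureTheory.integral_sub (hI2.1) ((hI0.1).const_mul c)]
    rw [MeasureTheory.integral_const_mul, hstep]
    have hcc : (μ + 1 + 1)^2 - ν^2 = c := by rw [hc_def]; ring
    rw [hcc]
    ring
end
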